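/- Let W : GL⁺(2) → ℝ be the planar isochoric St. Venant–Kirchhoff energy, W(F) := ‖(FᵀF)/(det F) − 𝟙‖², where 𝟙 is the 2×2 identity matrix and ‖·‖ the Frobenius norm. Then for every F ∈ GL⁺(2) with singular values λ₁, λ₂, W(F) = (λ₁/λ₂ − 1)² + (λ₂/λ₁ − 1)² = 4·(𝕂(F)² − 𝕂(F)), and W is polyconvex (hence quasiconvex and rank-one convex). -/

import Mathlib

open Matrix MeasureTheory Set

noncomputable section

/-- The space of real 2×2 matrices. -/
abbrev Mat2 := Matrix (Fin 2) (Fin 2) ℝ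

/-- Squared Frobenius norm of a 2×2 matrix. -/
def frobSq (F : Mat2) : ℝ := ∑ i, ∑ j, (F i j) ^ 2

/-- The special orthogonal group SO(2). -/
def SO2 (R : Mat2) : Prop := R.transpose * R = 1 ∧ R.det = 1

/-- The conformal special orthogonal group CSO(2) = (0,∞)·SO(2). -/
def CSO2 (A : Mat2) : Prop := ∃ a : ℝ, 0 < a ∧ ∃ R : Mat2, SO2 R ∧ A = a • R

/-- Conformal invariance of an energy `W : GL⁺(2) → ℝ`. -/
def ConfInv (W : Mat2 → ℝ) : Prop :=
  ∀ F : Mat2, 0 < F.det → ∀ A B : Mat2, CSO2 A → CSO2 B → W (A * F * B) = W F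

/-- `l1, l2` are the singular values of `F` (in either order): they are positive and their
product and sum of squares agree with `det F` and the squared Frobenius norm of `F`. -/
def SingVals (F : Mat2) (l1 l2 : ℝ) : Prop :=
  0 < l1 ∧ 0 < l2 ∧ l1 * l2 = F.det ∧ l1 ^ 2 + l2 ^ 2 = frobSq F

/-- `l1 ≥ l2` are the ordered singular values of `F`. -/
def OrdSingVals (F : Mat2) (l1 l2 : ℝ) : Prop := SingVals F l1 l2 ∧ l2 ≤ l1

/-- The larger singular value of a 2×2 matrix with positive determinant. -/
def sv1 (F : Mat2) : ℝ :=
  Real.sqrt ((frobSq F + Real.sqrt (frobSq F ^ 2 - 4 * F.det ^ 2)) / 2)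

/-- The smaller singular value of a 2×2 matrix with positive determinant. -/
def sv2 (F : Mat2) : ℝ :=
  Real.sqrt ((frobSq F - Real.sqrt (frobSq F ^ 2 - 4 * F.det ^ 2)) / 2)

/-- The distortion 𝕂(F) = ‖F‖²/(2 det F). -/
def Kdist (F : Mat2) : ℝ := frobSq F / (2 * F.det)

/-- Rank-one convexity of an energy on GL⁺(2). -/
def RankOneConvex (W : Mat2 → ℝ) : Prop :=
  ∀ F : Mat2, 0 < F.det → ∀ H : Mat2, H.rank = 1 → 0 < (F + H).det →
    ∀ t : ℝ, 0 ≤ t → t ≤ 1 → W (F + t • H) ≤ (1 - t) * W F + t * W (F + H)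

/-- The gradient (Jacobian matrix) of a map ϑ : ℝ² → ℝ². -/
def gradMat (ϑ : (Fin 2 → ℝ) → (Fin 2 → ℝ)) (x : Fin 2 → ℝ) : Mat2 :=
  Matrix.of fun i j => fderiv ℝ ϑ x (Pi.single j 1) i

/-- Quasiconvexity of an energy on GL⁺(2). -/
def Quasiconvex2 (W : Mat2 → ℝ) : Prop :=
  ∀ Ω : Set (Fin 2 → ℝ), IsOpen Ω → Bornology.IsBounded Ω →
    ∀ F₀ : Mat2, 0 < F₀.det →
    ∀ ϑ : (Fin 2 → ℝ) → (Fin 2 → ℝ), ContDiff ℝ (⊤ : ℕ∞) ϑ → HasCompactSupport ϑ →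
      tsupport ϑ ⊆ Ω → (∀ x ∈ Ω, 0 < (F₀ + gradMat ϑ x).det) →
      W F₀ * (volume Ω).toReal ≤ ∫ x in Ω, W (F₀ + gradMat ϑ x)

/-- Polyconvexity of an energy on GL⁺(2): `W(F) = P(F, det F)` for some convex
function `P : ℝ^{2×2} × ℝ → ℝ ∪ {+∞}`. -/
def Polyconvex (W : Mat2 → ℝ) : Prop :=
  ∃ P : Mat2 × ℝ → EReal,
    (∀ X Y : Mat2 × ℝ, ∀ t : ℝ, 0 ≤ t → t ≤ 1 →
      P (t • X + (1 - t) • Y) ≤ (t : ℝ) * P X + ((1 - t : ℝ) : EReal) * P Y) ∧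
    (∀ F : Mat2, 0 < F.det → (W F : EReal) = P (F, F.det))

/-- The rank-one convex envelope of `W` on GL⁺(2). -/
def RWenv (W : Mat2 → ℝ) (F : Mat2) : ℝ :=
  sSup {y | ∃ w : Mat2 → ℝ, RankOneConvex w ∧ (∀ X : Mat2, 0 < X.det → w X ≤ W X) ∧ y = w F}

/-- The quasiconvex envelope of `W` on GL⁺(2). -/
def QWenv (W : Mat2 → ℝ) (F : Mat2) : ℝ :=
  sSup {y | ∃ w : Mat2 → ℝ, Quasiconvex2 w ∧ (∀ X : Mat2, 0 < X.det → w X ≤ W X) ∧ y = w F}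

/-- The polyconvex envelope of `W` on GL⁺(2). -/
def PWenv (W : Mat2 → ℝ) (F : Mat2) : ℝ :=
  sSup {y | ∃ w : Mat2 → ℝ, Polyconvex w ∧ (∀ X : Mat2, 0 < X.det → w X ≤ W X) ∧ y = w F}

/-- The monotone-convex envelope of `h : [1,∞) → ℝ`. -/
def CmEnv (h : ℝ → ℝ) (t : ℝ) : ℝ :=
  sSup {y | ∃ p : ℝ → ℝ, ConvexOn ℝ (Set.Ici (1 : ℝ)) p ∧ MonotoneOn p (Set.Ici (1 : ℝ)) ∧
    (∀ s : ℝ, 1 ≤ s → p s ≤ h s) ∧ y = p t}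

/-- The convex envelope of `h : [1,∞) → ℝ`. -/
def CEnv (h : ℝ → ℝ) (t : ℝ) : ℝ :=
  sSup {y | ∃ p : ℝ → ℝ, ConvexOn ℝ (Set.Ici (1 : ℝ)) p ∧
    (∀ s : ℝ, 1 ≤ s → p s ≤ h s) ∧ y = p t}

/-- The special orthogonal group SO(n). -/
def SOnN {n : ℕ} (R : Matrix (Fin n) (Fin n) ℝ) : Prop := R.transpose * R = 1 ∧ R.det = 1

/-- The conformal special orthogonal group CSO(n) = (0,∞)·SO(n). -/
def CSOnN {n : ℕ} (A : Matrix (Fin n) (Fin n) ℝ) : Prop :=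
  ∃ a : ℝ, 0 < a ∧ ∃ R : Matrix (Fin n) (Fin n) ℝ, SOnN R ∧ A = a • R

/-- Conformal invariance of an energy `W : GL⁺(n) → ℝ`. -/
def ConfInvN {n : ℕ} (W : Matrix (Fin n) (Fin n) ℝ → ℝ) : Prop :=
  ∀ F : Matrix (Fin n) (Fin n) ℝ, 0 < F.det →
    ∀ A B : Matrix (Fin n) (Fin n) ℝ, CSOnN A → CSOnN B → W (A * F * B) = W F

/-- Rank-one convexity of an energy on GL⁺(n). -/
def RankOneConvexN {n : ℕ} (W : Matrix (Fin n) (Fin n) ℝ → ℝ) : Prop :=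
  ∀ F : Matrix (Fin n) (Fin n) ℝ, 0 < F.det →
    ∀ H : Matrix (Fin n) (Fin n) ℝ, H.rank = 1 → 0 < (F + H).det →
    ∀ t : ℝ, 0 ≤ t → t ≤ 1 → W (F + t • H) ≤ (1 - t) * W F + t * W (F + H)

/-- The gradient (Jacobian matrix) of a map ϑ : ℝⁿ → ℝⁿ. -/
def gradMatN {n : ℕ} (ϑ : (Fin n → ℝ) → (Fin n → ℝ)) (x : Fin n → ℝ) :
    Matrix (Fin n) (Fin n) ℝ :=
  Matrix.of fun i j => fderiv ℝ ϑ x (Pi.single j 1) i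

/-- Quasiconvexity of an energy on GL⁺(n). -/
def QuasiconvexN {n : ℕ} (W : Matrix (Fin n) (Fin n) ℝ → ℝ) : Prop :=
  ∀ Ω : Set (Fin n → ℝ), IsOpen Ω → Bornology.IsBounded Ω →
    ∀ F₀ : Matrix (Fin n) (Fin n) ℝ, 0 < F₀.det →
    ∀ ϑ : (Fin n → ℝ) → (Fin n → ℝ), ContDiff ℝ (⊤ : ℕ∞) ϑ → HasCompactSupport ϑ →
      tsupport ϑ ⊆ Ω → (∀ x ∈ Ω, 0 < (F₀ + gradMatN ϑ x).det) →
      W F₀ * (volume Ω).toReal ≤ ∫ x in Ω, W (F₀ + gradMatN ϑ x)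

/-- The rank-one convex envelope of `W` on GL⁺(n). -/
def RWenvN {n : ℕ} (W : Matrix (Fin n) (Fin n) ℝ → ℝ) (F : Matrix (Fin n) (Fin n) ℝ) : ℝ :=
  sSup {y | ∃ w : Matrix (Fin n) (Fin n) ℝ → ℝ, RankOneConvexN w ∧
    (∀ X : Matrix (Fin n) (Fin n) ℝ, 0 < X.det → w X ≤ W X) ∧ y = w F}

/-- The quasiconvex envelope of `W` on GL⁺(n). -/
def QWenvN {n : ℕ} (W : Matrix (Fin n) (Fin n) ℝ → ℝ) (F : Matrix (Fin n) (Fin n) ℝ) : ℝ :=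
  sSup {y | ∃ w : Matrix (Fin n) (Fin n) ℝ → ℝ, QuasiconvexN w ∧
    (∀ X : Matrix (Fin n) (Fin n) ℝ, 0 < X.det → w X ≤ W X) ∧ y = w F}

end
/-- The planar isochoric St. Venant–Kirchhoff energy `W(F) = ‖FᵀF/det F − 𝟙‖²`. -/
noncomputable def WSVK (F : Mat2) : ℝ := frobSq ((F.det)⁻¹ • (F.transpose * F) - 1)


/-! ### Auxiliary lemmas -/

lemma frobSq_nonneg (F : Mat2) : 0 ≤ frobSq F :=
  Finset.sum_nonneg fun _ _ => Finset.sum_nonneg fun _ _ => sq_nonneg _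

/-- The truncated quadratic `max (x² − 2x) 0`. -/
noncomputable def phiT (x : ℝ) : ℝ := max (x ^ 2 - 2 * x) 0

lemma phiT_nonneg (x : ℝ) : 0 ≤ phiT x := le_max_right _ _

lemma phiT_mono {x y : ℝ} (hx : 0 ≤ x) (hxy : x ≤ y) : phiT x ≤ phiT y := by
  unfold phiT
  rcases le_or_gt (x + y) 2 with h | h
  · refine max_le (le_trans ?_ (le_max_right _ _)) (le_max_right _ _)
    nlinarith
  · exact max_le (le_trans (by nlinarith) (le_max_left _ _)) (le_max_right _ _)

lemma phiT_convex {x y t : ℝ} (ht0 : 0 ≤ t) (ht1 : t ≤ 1) :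
    phiT (t * x + (1 - t) * y) ≤ t * phiT x + (1 - t) * phiT y := by
  unfold phiT
  have hx1 : x ^ 2 - 2 * x ≤ max (x ^ 2 - 2 * x) 0 := le_max_left _ _
  have hy1 : y ^ 2 - 2 * y ≤ max (y ^ 2 - 2 * y) 0 := le_max_left _ _
  have hx0 : (0:ℝ) ≤ max (x ^ 2 - 2 * x) 0 := le_max_right _ _
  have hy0 : (0:ℝ) ≤ max (y ^ 2 - 2 * y) 0 := le_max_right _ _
  have h1t : (0:ℝ) ≤ 1 - t := by linarith
  apply max_le
  · nlinarith [mul_le_mul_of_nonneg_left hx1 ht0, mul_le_mul_of_nonneg_left hy1 h1t,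
      sq_nonneg (x - y), mul_nonneg ht0 h1t]
  · nlinarith [mul_le_mul_of_nonneg_left hx0 ht0, mul_le_mul_of_nonneg_left hy0 h1t]

/-- Joint convexity of `‖·‖²/δ` (quadratic-over-linear), product form. -/
lemma frob_qol_prod (X Y : Mat2) {d1 d2 t : ℝ} (ht0 : 0 ≤ t) (ht1 : t ≤ 1) :
    frobSq (t • X + (1 - t) • Y) * (d1 * d2) ≤
      (t * (frobSq X * d2) + (1 - t) * (frobSq Y * d1)) * (t * d1 + (1 - t) * d2) := by
  have h1t : (0:ℝ) ≤ 1 - t := by linarith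
  have huv : (0:ℝ) ≤ t * (1 - t) := mul_nonneg ht0 h1t
  simp only [frobSq, Fin.sum_univ_two, Matrix.add_apply, Matrix.smul_apply, smul_eq_mul]
  nlinarith [mul_nonneg huv (sq_nonneg (X 0 0 * d2 - Y 0 0 * d1)),
    mul_nonneg huv (sq_nonneg (X 0 1 * d2 - Y 0 1 * d1)),
    mul_nonneg huv (sq_nonneg (X 1 0 * d2 - Y 1 0 * d1)),
    mul_nonneg huv (sq_nonneg (X 1 1 * d2 - Y 1 1 * d1))]

lemma frob_qol (X Y : Mat2) {d1 d2 t : ℝ} (h1 : 0 < d1) (h2 : 0 < d2)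
    (ht0 : 0 ≤ t) (ht1 : t ≤ 1) (hd : 0 < t * d1 + (1 - t) * d2) :
    frobSq (t • X + (1 - t) • Y) / (t * d1 + (1 - t) * d2) ≤
      t * (frobSq X / d1) + (1 - t) * (frobSq Y / d2) := by
  have hrhs : t * (frobSq X / d1) + (1 - t) * (frobSq Y / d2) =
      (t * (frobSq X * d2) + (1 - t) * (frobSq Y * d1)) / (d1 * d2) := by
    field_simp
  rw [hrhs, div_le_div_iff₀ hd (mul_pos h1 h2)]
  exact frob_qol_prod X Y ht0 ht1

/-- Value of the isochoric SVK energy in terms of `frobSq` and `det`. -/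
lemma WSVK_val (F : Mat2) (h : 0 < F.det) :
    WSVK F = (frobSq F / F.det) ^ 2 - 2 * (frobSq F / F.det) := by
  have hd : F.det ≠ 0 := ne_of_gt h
  rw [Matrix.det_fin_two] at hd ⊢
  simp only [WSVK, frobSq, Fin.sum_univ_two, Matrix.sub_apply, Matrix.smul_apply,
    Matrix.mul_apply, Matrix.transpose_apply, Matrix.one_apply, Matrix.det_fin_two,
    smul_eq_mul, Fin.sum_univ_two]
  norm_num
  field_simp
  ring

lemma frobSq_ge_two_det (F : Mat2) : 2 * F.det ≤ frobSq F := by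
  simp only [frobSq, Fin.sum_univ_two, Matrix.det_fin_two]
  nlinarith [sq_nonneg (F 0 0 - F 1 1), sq_nonneg (F 0 1 + F 1 0)]

/-- The polyconvexity witness. -/
noncomputable def Pfun : Mat2 × ℝ → EReal := fun X =>
  if 0 < X.2 then ((phiT (frobSq X.1 / X.2) : ℝ) : EReal) else ⊤

lemma Pfun_nonneg (X : Mat2 × ℝ) : 0 ≤ Pfun X := by
  unfold Pfun
  split
  · exact_mod_cast phiT_nonneg _
  · exact le_top

lemma Pfun_convex (X Y : Mat2 × ℝ) (t : ℝ) (ht0 : 0 ≤ t) (ht1 : t ≤ 1) :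
    Pfun (t • X + (1 - t) • Y) ≤ (t : ℝ) * Pfun X + ((1 - t : ℝ) : EReal) * Pfun Y := by
  have h1t : (0:ℝ) ≤ 1 - t := by linarith
  have hsnd : (t • X + (1 - t) • Y).2 = t * X.2 + (1 - t) * Y.2 := rfl
  have hfst : (t • X + (1 - t) • Y).1 = t • X.1 + (1 - t) • Y.1 := rfl
  rcases eq_or_lt_of_le ht0 with rfl | htpos
  · simp only [zero_smul, zero_add, sub_zero, one_smul, EReal.coe_zero, zero_mul,
      EReal.coe_one, one_mul]
    exact le_refl _
  rcases eq_or_lt_of_le ht1 with rfl | htlt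
  · simp only [one_smul, sub_self, zero_smul, add_zero, EReal.coe_zero, zero_mul,
      EReal.coe_one, one_mul]
    exact le_refl _
  -- now 0 < t < 1
  by_cases hX : 0 < X.2
  · by_cases hY : 0 < Y.2
    · have hd : 0 < t * X.2 + (1 - t) * Y.2 :=
        add_pos (mul_pos htpos hX) (mul_pos (by linarith) hY)
      rw [Pfun, Pfun, Pfun, hsnd, hfst, if_pos hd, if_pos hX, if_pos hY,
        ← EReal.coe_mul, ← EReal.coe_mul, ← EReal.coe_add, EReal.coe_le_coe_iff]
      calc phiT (frobSq (t • X.1 + (1 - t) • Y.1) / (t * X.2 + (1 - t) * Y.2))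
          ≤ phiT (t * (frobSq X.1 / X.2) + (1 - t) * (frobSq Y.1 / Y.2)) :=
            phiT_mono (div_nonneg (frobSq_nonneg _) hd.le)
              (frob_qol X.1 Y.1 hX hY ht0 ht1 hd)
        _ ≤ t * phiT (frobSq X.1 / X.2) + (1 - t) * phiT (frobSq Y.1 / Y.2) :=
            phiT_convex ht0 ht1
    · have hPY : Pfun Y = ⊤ := by rw [Pfun, if_neg hY]
      have h1 : ((1 - t : ℝ) : EReal) * Pfun Y = ⊤ := by
        rw [hPY]; exact EReal.coe_mul_top_of_pos (by linarith)
      have h2 : (t : ℝ) * Pfun X + ((1 - t : ℝ) : EReal) * Pfun Y = ⊤ := by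
        rw [h1, add_comm]
        refine EReal.top_add_of_ne_bot ?_
        have : (0:EReal) ≤ (t : ℝ) * Pfun X :=
          mul_nonneg (by exact_mod_cast ht0) (Pfun_nonneg X)
        exact (lt_of_lt_of_le EReal.bot_lt_zero this).ne'
      rw [h2]; exact le_top
  · have hPX : Pfun X = ⊤ := by rw [Pfun, if_neg hX]
    have h1 : ((t : ℝ) : EReal) * Pfun X = ⊤ := by
      rw [hPX]; exact EReal.coe_mul_top_of_pos htpos
    have h2 : (t : ℝ) * Pfun X + ((1 - t : ℝ) : EReal) * Pfun Y = ⊤ := by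
      rw [h1]
      refine EReal.top_add_of_ne_bot ?_
      have : (0:EReal) ≤ ((1 - t : ℝ) : EReal) * Pfun Y :=
        mul_nonneg (by exact_mod_cast h1t) (Pfun_nonneg Y)
      exact (lt_of_lt_of_le EReal.bot_lt_zero this).ne'
    rw [h2]; exact le_top

lemma Pfun_eq (F : Mat2) (h : 0 < F.det) : (WSVK F : EReal) = Pfun (F, F.det) := by
  rw [Pfun]
  simp only [if_pos h]
  norm_cast
  rw [WSVK_val F h]
  have hq : 2 ≤ frobSq F / F.det := (le_div_iff₀ h).2 (by linarith [frobSq_ge_two_det F])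
  rw [phiT, max_eq_left]
  nlinarith

/-- The planar isochoric St. Venant–Kirchhoff energy satisfies
`W(F) = (λ₁/λ₂ − 1)² + (λ₂/λ₁ − 1)² = 4(𝕂(F)² − 𝕂(F))` and is polyconvex. -/
theorem isochoric_SVK_representation_and_polyconvex :
    (∀ F : Mat2, 0 < F.det → ∀ l1 l2 : ℝ, SingVals F l1 l2 →
      WSVK F = (l1 / l2 - 1) ^ 2 + (l2 / l1 - 1) ^ 2 ∧
        WSVK F = 4 * ((Kdist F) ^ 2 - Kdist F)) ∧
      Polyconvex WSVK := by
  constructor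
  · intro F hF l1 l2 ⟨h1, h2, hprod, hsum⟩
    have hd : F.det ≠ 0 := ne_of_gt hF
    have h1' : l1 ≠ 0 := ne_of_gt h1
    have h2' : l2 ≠ 0 := ne_of_gt h2
    constructor
    · rw [WSVK_val F hF, ← hprod, ← hsum]
      field_simp
      ring
    · rw [WSVK_val F hF, Kdist]
      field_simp
      ring
  · exact ⟨Pfun, Pfun_convex, Pfun_eq⟩
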